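/- arXiv:0907.3092 — 4 statements merged into one kernel-verified Lean document; each statement's English description precedes it below -/
import Mathlib

section
/- Let B be the n×n boomerang matrix with elementary vector b where 0 ≤ b_1 ≤ b_2 ≤ ... ≤ b_n. Define the lower triangular matrix C by C_{hp} = sqrt(b_p - b_{p-1}) for p ≤ h (with b_0 = 0) and C_{hp} = 0 for p > h. Then C C^T = B. -/
/-- Explicit Cholesky factorization of a boomerang matrix: with `b 0 = 0` and
`b` nondecreasing, the lower triangular matrix `C h p = √(b (p+1) - b p)` for
`p ≤ h` (indices `0`-based, so `b (j+1)` is the `j`-th entry of the elementary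
vector) satisfies `C * Cᵀ = B` where `B h p = b (min h p + 1)`. -/
theorem boomerang_cholesky (n : ℕ) (b : ℕ → ℝ) (hb0 : b 0 = 0)
    (hmono : Monotone b)
    (C : Matrix (Fin n) (Fin n) ℝ)
    (hC : ∀ h p : Fin n, C h p =
      if (p : ℕ) ≤ (h : ℕ) then Real.sqrt (b ((p : ℕ) + 1) - b (p : ℕ)) else 0) :
    C * C.transpose = Matrix.of fun h p : Fin n => b (min (h : ℕ) (p : ℕ) + 1) := by
  ext h q
  simp only [Matrix.mul_apply, Matrix.transpose_apply, Matrix.of_apply]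
  have hterm : ∀ k : Fin n, C h k * C q k =
      if (k : ℕ) ≤ min (h : ℕ) (q : ℕ) then b ((k : ℕ) + 1) - b (k : ℕ) else 0 := by
    intro k
    rw [hC, hC]
    by_cases h1 : (k : ℕ) ≤ (h : ℕ) <;> by_cases h2 : (k : ℕ) ≤ (q : ℕ) <;>
      simp [h1, h2, le_min_iff,
        Real.mul_self_sqrt (sub_nonneg.mpr (hmono (Nat.le_succ _)))]
  rw [Finset.sum_congr rfl fun k _ => hterm k]
  rw [Fin.sum_univ_eq_sum_range
    (fun k => if k ≤ min (h : ℕ) (q : ℕ) then b (k + 1) - b k else 0)]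
  have hm : min (h : ℕ) (q : ℕ) + 1 ≤ n := by
    have := h.isLt
    omega
  rw [← Finset.sum_range_add_sum_Ico _ hm, Finset.sum_ite_of_true, Finset.sum_ite_of_false]
  · rw [Finset.sum_range_sub, hb0, sub_zero, Finset.sum_const_zero, add_zero]
  · intro k hk
    simp only [Finset.mem_Ico] at hk
    omega
  · intro k hk
    simp only [Finset.mem_range] at hk
    omega
end

section
/- Let (B_1,...,B_P) be D×D matrices with all differences B_{h+1} − B_h (and B_1) invertible, and B the block boomerang matrix with (h,p) block B_{min(h,p)}. Define T_l = −(B_{l+1} − B_l)^{-1} for l = 1,...,P−1 and D_m = (B_m − B_{m−1})^{-1}(B_{m+1} − B_{m−1})(B_{m+1} − B_m)^{-1} for m = 1,...,P (with the convention B_0 = 0 and, for m = P, D_P = (B_P − B_{P−1})^{-1}). If the B_h are symmetric and the differences commute appropriately so that B is invertible, then the block tridiagonal matrix with diagonal blocks D_m and off-diagonal blocks T_l is the inverse of B. -/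
noncomputable def Gblk (P D : ℕ) (A : ℕ → Matrix (Fin D) (Fin D) ℝ) (q p : ℕ) :
    Matrix (Fin D) (Fin D) ℝ :=
  if q = p then
    (if p + 1 = P then (A P - A (P - 1))⁻¹
     else (A (p + 1) - A p)⁻¹ * (A (p + 2) - A p) * (A (p + 2) - A (p + 1))⁻¹)
  else if p = q + 1 then -(A (q + 2) - A (q + 1))⁻¹
  else if q = p + 1 then -(A (p + 2) - A (p + 1))⁻¹
  else 0

lemma key (P D : ℕ) (A : ℕ → Matrix (Fin D) (Fin D) ℝ)
    (hA0 : A 0 = 0)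
    (hAinv : ∀ k, k < P → IsUnit (A (k + 1) - A k))
    (h p : ℕ) (hh : h < P) (hp : p < P) :
    ∑ q ∈ Finset.range P, A (min h q + 1) * Gblk P D A q p
      = if h = p then 1 else 0 := by
  have hmul : ∀ k, k < P → (A (k + 1) - A k) * (A (k + 1) - A k)⁻¹ = 1 := fun k hk =>
    Matrix.mul_nonsing_inv _ ((Matrix.isUnit_iff_isUnit_det _).mp (hAinv k hk))
  have hmul' : ∀ k, k < P → (A (k + 1) - A k)⁻¹ * (A (k + 1) - A k) = 1 := fun k hk =>
    Matrix.nonsing_inv_mul _ ((Matrix.isUnit_iff_isUnit_det _).mp (hAinv k hk))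
  -- diagonal block simplification in the interior
  have hD : ∀ m, m + 1 < P →
      (A (m + 1) - A m)⁻¹ * (A (m + 2) - A m) * (A (m + 2) - A (m + 1))⁻¹
        = (A (m + 1) - A m)⁻¹ + (A (m + 2) - A (m + 1))⁻¹ := by
    intro m hm
    have e1 : A (m + 2) - A m = (A (m + 1) - A m) + (A (m + 2) - A (m + 1)) := by abel
    rw [e1, mul_add, add_mul, hmul' m (by omega), mul_assoc, hmul (m + 1) hm,
      one_mul, mul_one, add_comm]
  -- split the summand into three indicator pieces
  have hsplit : ∀ q, A (min h q + 1) * Gblk P D A q p =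
      (if q = p then A (min h p + 1) *
        (if p + 1 = P then (A P - A (P - 1))⁻¹
         else (A (p + 1) - A p)⁻¹ * (A (p + 2) - A p) * (A (p + 2) - A (p + 1))⁻¹)
       else 0)
      + ((if p = q + 1 then A (min h q + 1) * -(A (q + 2) - A (q + 1))⁻¹ else 0)
        + (if q = p + 1 then A (min h (p + 1) + 1) * -(A (p + 2) - A (p + 1))⁻¹ else 0)) := by
    intro q
    by_cases h1 : q = p
    · subst h1
      simp [Gblk, (by omega : ¬ q = q + 1)]
    · by_cases h2 : p = q + 1
      · have h3 : ¬ q = p + 1 := by omega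
        simp only [Gblk, if_neg h1, if_pos h2, if_neg h3]
        simp
      · by_cases h3 : q = p + 1
        · subst h3
          simp [Gblk, h1, h2]
        · simp [Gblk, h1, h2, h3]
  rw [Finset.sum_congr rfl (fun q _ => hsplit q), Finset.sum_add_distrib,
    Finset.sum_add_distrib, Finset.sum_ite_eq' (Finset.range P) p,
    Finset.sum_ite_eq' (Finset.range P) (p + 1)]
  have hc2 : (∑ x ∈ Finset.range P,
        if p = x + 1 then A (min h x + 1) * -(A (x + 2) - A (x + 1))⁻¹ else 0)
      = if 1 ≤ p then A (min h (p - 1) + 1) * -(A (p + 1) - A p)⁻¹ else 0 := by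
    rcases p with _ | m
    · simp
    · have hcong : ∀ x ∈ Finset.range P,
          (if m + 1 = x + 1 then A (min h x + 1) * -(A (x + 2) - A (x + 1))⁻¹ else 0)
            = if m = x then A (min h x + 1) * -(A (x + 2) - A (x + 1))⁻¹ else 0 := by
        intro x _; simp
      rw [Finset.sum_congr rfl hcong, Finset.sum_ite_eq,
        if_pos (Finset.mem_range.mpr (by omega : m < P))]
      simp
  rw [hc2, if_pos (Finset.mem_range.mpr hp)]
  by_cases hP : p + 1 = P
  · rw [if_pos hP, if_neg (show ¬ p + 1 ∈ Finset.range P by simp; omega), add_zero]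
    have hP1 : P - 1 = p := by omega
    rw [hP1, ← hP]
    rcases p with _ | m
    · have hh0 : h = 0 := by omega
      have h1 : (A (0 + 1) - A 0) * (A (0 + 1) - A 0)⁻¹ = 1 := hmul 0 (by omega)
      rw [hA0, sub_zero] at h1
      simp [hh0, hA0, h1]
    · rw [if_pos (by omega : 1 ≤ m + 1)]
      rcases Nat.lt_or_ge h (m + 1) with hcase | hcase
      · rw [show min h (m + 1) = h by omega, show min h (m + 1 - 1) = h by omega,
          if_neg (by omega : ¬ h = m + 1)]
        noncomm_ring
      · have hhp : h = m + 1 := by omega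
        subst hhp
        rw [show min (m + 1) (m + 1) = m + 1 by omega,
          show min (m + 1) (m + 1 - 1) = m by omega, if_pos rfl]
        have key : A (m + 1 + 1) * (A (m + 1 + 1) - A (m + 1))⁻¹
            + A (m + 1) * -(A (m + 1 + 1) - A (m + 1))⁻¹
            = (A (m + 1 + 1) - A (m + 1)) * (A (m + 1 + 1) - A (m + 1))⁻¹ := by
          noncomm_ring
        rw [key, hmul (m + 1) (by omega)]
  · have hP2 : p + 1 < P := by omega
    rw [if_neg hP, if_pos (Finset.mem_range.mpr hP2), hD p hP2]
    have e1 : (A (p + 1) - A p) * (A (p + 1) - A p)⁻¹ = 1 := hmul p (by omega)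
    have e2 : (A (p + 2) - A (p + 1)) * (A (p + 2) - A (p + 1))⁻¹ = 1 :=
      hmul (p + 1) (by omega)
    rcases Nat.lt_or_ge h p with hcase | hcase
    · -- h < p, in particular p ≥ 1
      rw [show min h p = h by omega, show min h (p - 1) = h by omega,
        show min h (p + 1) = h by omega, if_pos (show 1 ≤ p by omega),
        if_neg (show ¬ h = p by omega)]
      noncomm_ring
    · rcases Nat.lt_or_ge p h with hcase2 | hcase2
      · -- h > p
        rw [show min h p = p by omega, show min h (p + 1) = p + 1 by omega,
          if_neg (by omega : ¬ h = p)]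
        rcases p with _ | m
        · rw [if_neg (by omega : ¬ 1 ≤ 0), hA0, sub_zero] at *
          have key : A 1 * ((A (0 + 1))⁻¹ + (A (0 + 2) - A (0 + 1))⁻¹)
              + (0 + A (0 + 1 + 1) * -(A (0 + 2) - A (0 + 1))⁻¹)
              = A (0 + 1) * (A (0 + 1))⁻¹ - (A (0 + 2) - A (0 + 1)) * (A (0 + 2) - A (0 + 1))⁻¹ := by
            noncomm_ring
          rw [key, e1, e2, sub_self]
        · rw [if_pos (show 1 ≤ m + 1 by omega), show m + 1 - 1 = m by omega,
            show min h m = m by omega]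
          have key : A (m + 1 + 1) * ((A (m + 1 + 1) - A (m + 1))⁻¹ + (A (m + 1 + 2) - A (m + 1 + 1))⁻¹)
              + (A (m + 1) * -(A (m + 1 + 1) - A (m + 1))⁻¹
                + A (m + 1 + 1 + 1) * -(A (m + 1 + 2) - A (m + 1 + 1))⁻¹)
              = (A (m + 1 + 1) - A (m + 1)) * (A (m + 1 + 1) - A (m + 1))⁻¹
                - (A (m + 1 + 2) - A (m + 1 + 1)) * (A (m + 1 + 2) - A (m + 1 + 1))⁻¹ := by
            noncomm_ring
          rw [key, e1, e2, sub_self]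
      · -- h = p
        have hhp : h = p := by omega
        subst hhp
        rw [show min h h = h by omega, show min h (h + 1) = h by omega, if_pos rfl]
        rcases h with _ | m
        · rw [if_neg (by omega : ¬ 1 ≤ 0), hA0, sub_zero] at *
          have key : A 1 * ((A (0 + 1))⁻¹ + (A (0 + 2) - A (0 + 1))⁻¹)
              + (0 + A (0 + 1) * -(A (0 + 2) - A (0 + 1))⁻¹)
              = A (0 + 1) * (A (0 + 1))⁻¹ := by
            noncomm_ring
          rw [key, e1]
        · rw [if_pos (by omega : 1 ≤ m + 1), show m + 1 - 1 = m by omega,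
            show min (m + 1) m = m by omega]
          have key : A (m + 1 + 1) * ((A (m + 1 + 1) - A (m + 1))⁻¹ + (A (m + 1 + 2) - A (m + 1 + 1))⁻¹)
              + (A (m + 1) * -(A (m + 1 + 1) - A (m + 1))⁻¹
                + A (m + 1 + 1) * -(A (m + 1 + 2) - A (m + 1 + 1))⁻¹)
              = (A (m + 1 + 1) - A (m + 1)) * (A (m + 1 + 1) - A (m + 1))⁻¹ := by
            noncomm_ring
          rw [key, e1]


/-- Proposition 2 of the paper: the inverse of a block boomerang matrix is
symmetric block tridiagonal.  Blocks are `A 1, ..., A P` with the convention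
`A 0 = 0` (`Fin P` indices are `0`-based); the `(h,p)` block of `B` is
`A (min h p + 1)`.  With all differences `A (k+1) - A k` invertible, symmetric
and pairwise commuting, the block tridiagonal matrix `Tinv` with diagonal
blocks `D_m = (B_m - B_{m-1})⁻¹ (B_{m+1} - B_{m-1}) (B_{m+1} - B_m)⁻¹`
(for the last block `D_P = (B_P - B_{P-1})⁻¹`) and off-diagonal blocks
`T_l = -(B_{l+1} - B_l)⁻¹` is a two-sided inverse of `B`. -/
theorem block_boomerang_inverse (P D : ℕ)
    (A : ℕ → Matrix (Fin D) (Fin D) ℝ)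
    (hA0 : A 0 = 0)
    (hAsymm : ∀ h, h ≤ P → (A h).IsSymm)
    (hAinv : ∀ k, k < P → IsUnit (A (k + 1) - A k))
    (hAcomm : ∀ k l, Commute (A (k + 1) - A k) (A (l + 1) - A l))
    (B : Matrix (Fin P × Fin D) (Fin P × Fin D) ℝ)
    (hB : ∀ (h p : Fin P) (i j : Fin D),
      B (h, i) (p, j) = A (min (h : ℕ) (p : ℕ) + 1) i j)
    (Dblk : Fin P → Matrix (Fin D) (Fin D) ℝ)
    (hDblk : ∀ m : Fin P, Dblk m =
      if (m : ℕ) + 1 = P then (A P - A (P - 1))⁻¹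
      else (A ((m : ℕ) + 1) - A (m : ℕ))⁻¹ * (A ((m : ℕ) + 2) - A (m : ℕ)) *
        (A ((m : ℕ) + 2) - A ((m : ℕ) + 1))⁻¹)
    (Tblk : ℕ → Matrix (Fin D) (Fin D) ℝ)
    (hTblk : ∀ k, Tblk k = -(A (k + 2) - A (k + 1))⁻¹)
    (Tinv : Matrix (Fin P × Fin D) (Fin P × Fin D) ℝ)
    (hTinv : ∀ (h p : Fin P) (i j : Fin D),
      Tinv (h, i) (p, j) =
        if h = p then Dblk h i j
        else if (p : ℕ) = (h : ℕ) + 1 then Tblk (h : ℕ) i j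
        else if (h : ℕ) = (p : ℕ) + 1 then Tblk (p : ℕ) i j
        else 0) :
    B * Tinv = 1 ∧ Tinv * B = 1 := by
  have hBT : B * Tinv = 1 := by
    ext x y
    obtain ⟨h, i⟩ := x
    obtain ⟨p, j⟩ := y
    rw [Matrix.mul_apply, Fintype.sum_prod_type]
    have inner : ∀ q : Fin P,
        (∑ k : Fin D, B (h, i) (q, k) * Tinv (q, k) (p, j))
          = (A (min (h : ℕ) (q : ℕ) + 1) * Gblk P D A (q : ℕ) (p : ℕ)) i j := by
      intro q
      rw [Matrix.mul_apply]
      refine Finset.sum_congr rfl fun k _ => ?_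
      rw [hB, hTinv]
      congr 1
      unfold Gblk
      by_cases h1 : q = p
      · subst h1
        rw [if_pos rfl, if_pos rfl, hDblk]
      · have h1' : ¬ (q : ℕ) = (p : ℕ) := fun e => h1 (Fin.ext e)
        rw [if_neg h1, if_neg h1']
        by_cases h2 : (p : ℕ) = (q : ℕ) + 1
        · rw [if_pos h2, if_pos h2, hTblk]
        · rw [if_neg h2, if_neg h2]
          by_cases h4 : (q : ℕ) = (p : ℕ) + 1
          · rw [if_pos h4, if_pos h4, hTblk]
          · rw [if_neg h4, if_neg h4]
            rfl
    rw [Finset.sum_congr rfl fun q _ => inner q]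
    have : (∑ q : Fin P, (A (min (h : ℕ) (q : ℕ) + 1) * Gblk P D A (q : ℕ) (p : ℕ)) i j)
        = (∑ q : Fin P, A (min (h : ℕ) (q : ℕ) + 1) * Gblk P D A (q : ℕ) (p : ℕ)) i j := by
      rw [Matrix.sum_apply]
    rw [this, show (∑ q : Fin P, A (min (h : ℕ) (q : ℕ) + 1) * Gblk P D A (q : ℕ) (p : ℕ))
        = ∑ q ∈ Finset.range P, A (min (h : ℕ) q + 1) * Gblk P D A q (p : ℕ) from
      Fin.sum_univ_eq_sum_range (fun q => A (min (h : ℕ) q + 1) * Gblk P D A q (p : ℕ)) P,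
      key P D A hA0 hAinv (h : ℕ) (p : ℕ) h.isLt p.isLt]
    by_cases hhp : h = p
    · subst hhp
      simp [Matrix.one_apply, Prod.ext_iff]
    · have : ¬ ((h : ℕ) = (p : ℕ)) := fun e => hhp (Fin.ext e)
      rw [if_neg this]
      simp [Matrix.one_apply, Prod.ext_iff, hhp]
  exact ⟨hBT, mul_eq_one_comm.mp hBT⟩
end

section
/- Let A and B be n×n boomerang matrices with elementary vectors a and b respectively. Then Tr(A^T B) = Tr(A B) = Σ_{j=1}^{n} (2(n−j)+1) a_j b_j. -/
lemma boomerang_fiber_card (n : ℕ) (j : Fin n) :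
    ((Finset.univ : Finset (Fin n × Fin n)).filter
      (fun q => min q.1 q.2 = j)).card = 2 * (n - 1 - (j : ℕ)) + 1 := by
  have hset : ((Finset.univ : Finset (Fin n × Fin n)).filter
      (fun q => min q.1 q.2 = j)) =
      ((Finset.univ : Finset (Fin n × Fin n)).filter
        (fun q => j ≤ q.1 ∧ j ≤ q.2)) \
      ((Finset.univ : Finset (Fin n × Fin n)).filter
        (fun q => j < q.1 ∧ j < q.2)) := by
    ext q
    simp only [Finset.mem_filter, Finset.mem_sdiff, Finset.mem_univ, true_and]
    constructor
    · rintro rfl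
      refine ⟨⟨min_le_left _ _, min_le_right _ _⟩, ?_⟩
      rintro ⟨h1, h2⟩
      exact absurd (lt_min h1 h2) (lt_irrefl _)
    · rintro ⟨⟨h1, h2⟩, h3⟩
      rcases min_choice q.1 q.2 with h | h <;> rw [h]
      · by_contra hne
        exact h3 ⟨lt_of_le_of_ne h1 (Ne.symm hne),
          lt_of_lt_of_le (lt_of_le_of_ne h1 (Ne.symm hne)) (h ▸ min_le_right q.1 q.2)⟩
      · by_contra hne
        exact h3 ⟨lt_of_lt_of_le (lt_of_le_of_ne h2 (Ne.symm hne)) (h ▸ min_le_left q.1 q.2),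
          lt_of_le_of_ne h2 (Ne.symm hne)⟩
  have hsub : ((Finset.univ : Finset (Fin n × Fin n)).filter
        (fun q => j < q.1 ∧ j < q.2)) ⊆
      ((Finset.univ : Finset (Fin n × Fin n)).filter
        (fun q => j ≤ q.1 ∧ j ≤ q.2)) := by
    intro q hq
    simp only [Finset.mem_filter, Finset.mem_univ, true_and] at *
    exact ⟨le_of_lt hq.1, le_of_lt hq.2⟩
  have h1 : ((Finset.univ : Finset (Fin n × Fin n)).filter
      (fun q => j ≤ q.1 ∧ j ≤ q.2)).card = (n - (j : ℕ)) * (n - (j : ℕ)) := by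
    have : ((Finset.univ : Finset (Fin n × Fin n)).filter
        (fun q => j ≤ q.1 ∧ j ≤ q.2)) =
        (Finset.Ici j) ×ˢ (Finset.Ici j) := by
      ext q
      simp [Finset.mem_product, and_comm]
    rw [this, Finset.card_product, Fin.card_Ici]
  have h2 : ((Finset.univ : Finset (Fin n × Fin n)).filter
      (fun q => j < q.1 ∧ j < q.2)).card = (n - 1 - (j : ℕ)) * (n - 1 - (j : ℕ)) := by
    have : ((Finset.univ : Finset (Fin n × Fin n)).filter
        (fun q => j < q.1 ∧ j < q.2)) =
        (Finset.Ioi j) ×ˢ (Finset.Ioi j) := by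
      ext q
      simp [Finset.mem_product]
    rw [this, Finset.card_product, Fin.card_Ioi]
  rw [hset, Finset.card_sdiff_of_subset hsub, h1, h2]
  have hj : (j : ℕ) < n := j.isLt
  set k := n - 1 - (j : ℕ) with hk
  have hnj : n - (j : ℕ) = k + 1 := by omega
  rw [hnj]
  have : (k + 1) * (k + 1) = k * k + (2 * k + 1) := by ring
  omega

/-- Equation (5.4.5) of the paper: for boomerang matrices `A, B` with
elementary vectors `a, b` (`0`-based indices: the `1`-based entry `a_j`
is `a ⟨j-1⟩`), `Tr(Aᵀ B) = Tr(A B) = Σ_{j=1}^n (2(n-j)+1) a_j b_j`. -/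
theorem boomerang_trace_formula (n : ℕ) (a b : Fin n → ℝ)
    (A B : Matrix (Fin n) (Fin n) ℝ)
    (hA : ∀ h p : Fin n, A h p = a (min h p))
    (hB : ∀ h p : Fin n, B h p = b (min h p)) :
    Matrix.trace (A.transpose * B) = Matrix.trace (A * B) ∧
    Matrix.trace (A * B) =
      ∑ j : Fin n, ((2 * (n - 1 - (j : ℕ)) + 1 : ℕ) : ℝ) * a j * b j := by
  have hAsymm : A.transpose = A := by
    ext h p
    simp [Matrix.transpose_apply, hA, min_comm]
  refine ⟨by rw [hAsymm], ?_⟩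
  have htr : Matrix.trace (A * B) =
      ∑ q : Fin n × Fin n, (a (min q.1 q.2) * b (min q.1 q.2)) := by
    rw [Matrix.trace, Fintype.sum_prod_type]
    simp only [Matrix.diag_apply, Matrix.mul_apply, hA, hB]
    congr 1
    ext h
    congr 1
    ext p
    rw [min_comm p h]
  rw [htr]
  have := Finset.sum_comp (s := (Finset.univ : Finset (Fin n × Fin n)))
    (fun j : Fin n => a j * b j) (fun q : Fin n × Fin n => min q.1 q.2)
  rw [this]
  have himg : (Finset.univ : Finset (Fin n × Fin n)).image
      (fun q : Fin n × Fin n => min q.1 q.2) = Finset.univ := by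
    apply Finset.eq_univ_of_forall
    intro j
    exact Finset.mem_image.mpr ⟨(j, j), Finset.mem_univ _, min_self j⟩
  rw [himg]
  apply Finset.sum_congr rfl
  intro j _
  rw [boomerang_fiber_card n j, nsmul_eq_mul, mul_assoc]
end

section
/- Let G ∈ ℝ^{m×n} with m = m_1 m_2, n = n_1 n_2, and fix G_1 ∈ ℝ^{m_1×n_1} with G_1 ≠ 0. For h ∈ {1,...,m_2}, l ∈ {1,...,n_2}, let R(G)_{hl} be the m_1×n_1 matrix with entries (R(G)_{hl})_{ij} = G_{h+(i−1)m_2, l+(j−1)n_2}. Then the matrix G_2* ∈ ℝ^{m_2×n_2} defined by (G_2*)_{hl} = Tr(R(G)_{hl}^T G_1)/Tr(G_1 G_1^T) minimizes G_2 ↦ ‖G − G_1 ⊗ G_2‖_F^2 over all G_2 ∈ ℝ^{m_2×n_2}. -/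
open Kronecker

private lemma key_min {ι : Type*} [Fintype ι] (g a : ι → ℝ)
    (hA : 0 < ∑ i, (a i) ^ 2) (c : ℝ) :
    ∑ i, (g i - a i * ((∑ i, g i * a i) / (∑ i, (a i) ^ 2))) ^ 2 ≤
      ∑ i, (g i - a i * c) ^ 2 := by
  set A := ∑ i, (a i) ^ 2 with hAdef
  set B := ∑ i, g i * a i with hBdef
  have expand : ∀ d : ℝ, ∑ i, (g i - a i * d) ^ 2
      = (∑ i, (g i) ^ 2) - 2 * d * B + d ^ 2 * A := by
    intro d
    have e : ∀ i, (g i - a i * d) ^ 2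
        = g i ^ 2 - 2 * d * (g i * a i) + d ^ 2 * (a i) ^ 2 := fun i => by ring
    simp_rw [e, Finset.sum_add_distrib, Finset.sum_sub_distrib, ← Finset.mul_sum]
    rfl
  rw [expand, expand]
  have hAne : A ≠ 0 := ne_of_gt hA
  have h1 : B / A * A = B := div_mul_cancel₀ B hAne
  nlinarith [sq_nonneg (c - B / A), sq_nonneg (c * A - B), mul_pos hA hA]

/-- Pitsianis–Van Loan nearest Kronecker product (Proposition 4 of the paper):
with `G` indexed by `(Fin m₁ × Fin m₂) × (Fin n₁ × Fin n₂)` so that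
`(G₁ ⊗ G₂) (i,h) (j,l) = G₁ i j * G₂ h l`, the matrix
`G₂* h l = Tr(R(G)_{hl}ᵀ G₁) / Tr(G₁ G₁ᵀ)` (where `R(G)_{hl} i j = G (i,h) (j,l)`)
minimizes the squared Frobenius norm `‖G - G₁ ⊗ G₂‖_F²` over `G₂`. -/
theorem nearest_kronecker_product (m₁ m₂ n₁ n₂ : ℕ)
    (G : Matrix (Fin m₁ × Fin m₂) (Fin n₁ × Fin n₂) ℝ)
    (G₁ : Matrix (Fin m₁) (Fin n₁) ℝ) (hG₁ : G₁ ≠ 0)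
    (G₂star : Matrix (Fin m₂) (Fin n₂) ℝ)
    (hG₂star : ∀ (h : Fin m₂) (l : Fin n₂), G₂star h l =
      (∑ i : Fin m₁, ∑ j : Fin n₁, G (i, h) (j, l) * G₁ i j) /
        (∑ i : Fin m₁, ∑ j : Fin n₁, (G₁ i j) ^ 2)) :
    ∀ G₂ : Matrix (Fin m₂) (Fin n₂) ℝ,
      (∑ p, ∑ q, (G p q - (G₁ ⊗ₖ G₂star) p q) ^ 2) ≤
        ∑ p, ∑ q, (G p q - (G₁ ⊗ₖ G₂) p q) ^ 2 := by
  intro G₂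
  -- positivity of ∑ G₁²
  have hApos : 0 < ∑ ij : Fin m₁ × Fin n₁, (G₁ ij.1 ij.2) ^ 2 := by
    obtain ⟨i, j, hij⟩ : ∃ i j, G₁ i j ≠ 0 := by
      by_contra hc
      push_neg at hc
      exact hG₁ (by ext i j; simpa using hc i j)
    exact Finset.sum_pos' (fun x _ => sq_nonneg _)
      ⟨(i, j), Finset.mem_univ _, by positivity⟩
  -- reorganize sums: over ((i,h),(j,l)) ↦ over (h,l) then (i,j)
  have reorg : ∀ M : Matrix (Fin m₂) (Fin n₂) ℝ,
      (∑ p, ∑ q, (G p q - (G₁ ⊗ₖ M) p q) ^ 2)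
      = ∑ hl : Fin m₂ × Fin n₂, ∑ ij : Fin m₁ × Fin n₁,
          (G (ij.1, hl.1) (ij.2, hl.2) - G₁ ij.1 ij.2 * M hl.1 hl.2) ^ 2 := by
    intro M
    rw [← Finset.sum_product', ← Finset.sum_product']
    apply Finset.sum_nbij' (i := fun x => ((x.1.2, x.2.2), (x.1.1, x.2.1)))
      (j := fun x => ((x.2.1, x.1.1), (x.2.2, x.1.2))) <;>
      simp [Matrix.kroneckerMap_apply]
  rw [reorg, reorg]
  apply Finset.sum_le_sum
  rintro ⟨h, l⟩ -
  have hstar : G₂star h l =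
      (∑ ij : Fin m₁ × Fin n₁, G (ij.1, h) (ij.2, l) * G₁ ij.1 ij.2) /
        (∑ ij : Fin m₁ × Fin n₁, (G₁ ij.1 ij.2) ^ 2) := by
    rw [hG₂star, ← Finset.sum_product', ← Finset.sum_product']
    rfl
  rw [hstar]
  exact key_min (fun ij : Fin m₁ × Fin n₁ => G (ij.1, h) (ij.2, l))
    (fun ij => G₁ ij.1 ij.2) hApos (G₂ h l)
end
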